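/- Let n ≥ 1, m = 2n, and let A, B be 2n×2n complex matrices such that the block matrix (A | B) has rank 2n. Then the following are equivalent: (i) for every 2n times continuously differentiable y : [0,1] → ℂ satisfying A ŷ₀ + B ŷ₁ = 0 one has Im(∫₀¹ (−i)^{2n} y^{(2n)}(x)·conj(y(x)) dx) ≥ 0; (ii) there exists a linear map V : ℂ^{2n} → ℂ^{2n} with ‖Vx‖ ≤ ‖x‖ for all x, such that for every 2n times continuously differentiable y : [0,1] → ℂ one has A ŷ₀ + B ŷ₁ = 0 if and only if (V − I)·y^∨ + i(V + I)·y^∧ = 0. -/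

import Mathlib

open scoped BigOperators
open Complex intervalIntegral
open Polynomial

/-- The vector `y^∧ = (y(0), …, y^{(n−1)}(0), y(1), …, y^{(n−1)}(1)) ∈ ℂ^{2n}`
(0-indexed components), as an element of Euclidean space. -/
noncomputable def ywedge (n : ℕ) (y : ℝ → ℂ) : EuclideanSpace ℂ (Fin (2 * n)) := WithLp.toLp 2 fun k =>
  if (k : ℕ) < n then iteratedDeriv (k : ℕ) y 0 else iteratedDeriv ((k : ℕ) - n) y 1

/-- The vector `y^∨` of quasi-derivatives: with 0-indexed component `k`,
`(y^∨)_k = (−1)^{n−1−k}·y^{(2n−1−k)}(0)` for `k < n` and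
`(y^∨)_{n+k} = −(−1)^{n−1−k}·y^{(2n−1−k)}(1)` for `k < n`. -/
noncomputable def yvee (n : ℕ) (y : ℝ → ℂ) : EuclideanSpace ℂ (Fin (2 * n)) := WithLp.toLp 2 fun k =>
  if (k : ℕ) < n then
    (-1 : ℂ) ^ (n - 1 - (k : ℕ)) * iteratedDeriv (2 * n - 1 - (k : ℕ)) y 0
  else
    -((-1 : ℂ) ^ (n - 1 - ((k : ℕ) - n)) * iteratedDeriv (2 * n - 1 - ((k : ℕ) - n)) y 1)


lemma s12polyeval_contDiff (p : ℂ[X]) (m : ℕ) : ContDiff ℝ (m : ℕ) (fun x : ℝ => p.eval (x:ℂ)) := by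
  induction p using Polynomial.induction_on' with
  | add p q hp hq => simpa [Polynomial.eval_add] using hp.add hq
  | monomial k a =>
      simp only [Polynomial.eval_monomial]
      exact contDiff_const.mul ((Complex.ofRealCLM.contDiff).pow k)

lemma s12polyeval_deriv (p : ℂ[X]) :
    deriv (fun x : ℝ => p.eval (x:ℂ)) = fun x : ℝ => p.derivative.eval (x:ℂ) := by
  funext x
  exact ((p.hasDerivAt (x:ℂ)).comp_ofReal).deriv

lemma s12polyeval_iteratedDeriv (p : ℂ[X]) (k : ℕ) :
    iteratedDeriv k (fun x : ℝ => p.eval (x:ℂ)) = fun x : ℝ => ((derivative)^[k] p).eval (x:ℂ) := by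
  induction k generalizing p with
  | zero => simp
  | succ k ih =>
      rw [iteratedDeriv_succ', s12polyeval_deriv, ih, Function.iterate_succ_apply]

lemma s12iterate_derivative_comp_sub (p : ℂ[X]) (t : ℂ) (k : ℕ) :
    (derivative)^[k] (p.comp (X - C t)) = ((derivative)^[k] p).comp (X - C t) := by
  induction k with
  | zero => rfl
  | succ k ih =>
      rw [Function.iterate_succ_apply', ih, Polynomial.derivative_comp,
        Function.iterate_succ_apply']
      simp

/-- the Taylor-style polynomial with prescribed derivatives at `t`. -/
noncomputable def s12pjet (m : ℕ) (c : Fin m → ℂ) (t : ℂ) : ℂ[X] :=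
  (∑ j : Fin m, Polynomial.C (c j / (j : ℕ).factorial) * X ^ (j : ℕ)).comp (X - C t)

lemma s12pjet_deriv (m : ℕ) (c : Fin m → ℂ) (t : ℂ) (k : Fin m) :
    ((derivative)^[(k:ℕ)] (s12pjet m c t)).eval t = c k := by
  rw [s12pjet, s12iterate_derivative_comp_sub, Polynomial.eval_comp]
  simp only [Polynomial.eval_sub, Polynomial.eval_X, Polynomial.eval_C, sub_self]
  rw [← Polynomial.coeff_zero_eq_eval_zero, Polynomial.coeff_iterate_derivative]
  simp only [zero_add]
  have hcoeff : (∑ j : Fin m, Polynomial.C (c j / (j : ℕ).factorial) * X ^ (j : ℕ)).coeff (k:ℕ)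
      = c k / (k:ℕ).factorial := by
    rw [Polynomial.finset_sum_coeff]
    rw [Finset.sum_eq_single k]
    · simp [Polynomial.coeff_C_mul, Polynomial.coeff_X_pow]
    · intro b _ hb
      simp only [Polynomial.coeff_C_mul, Polynomial.coeff_X_pow]
      rw [if_neg (fun h => hb (Fin.ext h.symm)), mul_zero]
    · simp
  rw [hcoeff, Nat.descFactorial_self, nsmul_eq_mul]
  rw [mul_div_cancel₀]
  exact_mod_cast Nat.factorial_ne_zero (k:ℕ)

lemma s12jets_exist (m : ℕ) (c d : Fin m → ℂ) :
    ∃ y : ℝ → ℂ, ContDiff ℝ (m : ℕ) y ∧ (∀ k : Fin m, iteratedDeriv (k : ℕ) y 0 = c k) ∧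
      (∀ k : Fin m, iteratedDeriv (k : ℕ) y 1 = d k) := by
  classical
  set f : ContDiffBump (0:ℝ) := ⟨1/4, 1/2, by norm_num, by norm_num⟩ with hf
  set g : ContDiffBump (1:ℝ) := ⟨1/4, 1/2, by norm_num, by norm_num⟩ with hg
  set q0 := s12pjet m c 0 with hq0
  set q1 := s12pjet m d 1 with hq1
  set y : ℝ → ℂ := fun x => (f x : ℂ) * q0.eval (x:ℂ) + (g x : ℂ) * q1.eval (x:ℂ) with hy
  have hcd : ContDiff ℝ (m:ℕ) y := by
    apply ContDiff.add
    · exact (Complex.ofRealCLM.contDiff.comp f.contDiff).mul (s12polyeval_contDiff q0 m)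
    · exact (Complex.ofRealCLM.contDiff.comp g.contDiff).mul (s12polyeval_contDiff q1 m)
  have hnear0 : y =ᶠ[nhds (0:ℝ)] fun x : ℝ => q0.eval (x:ℂ) := by
    filter_upwards [Metric.ball_mem_nhds (0:ℝ) (by norm_num : (0:ℝ) < 1/4)] with x hx
    have hx' : |x| < 1/4 := by simpa [Real.dist_eq] using hx
    have h1 : f x = 1 := f.one_of_mem_closedBall (by
      simp only [Metric.mem_closedBall, Real.dist_eq, sub_zero]
      exact le_of_lt hx')
    have h2 : g x = 0 := by
      rw [← Function.notMem_support, g.support_eq]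
      simp only [Metric.mem_ball, Real.dist_eq]
      intro hcon
      have : |x - 1| ≥ 3/4 := by
        cases abs_lt.mp hx' with
        | intro hl hr => rw [abs_sub_comm, abs_of_pos (by linarith)]; linarith
      have hc2 : |x - 1| < 1/2 := lt_of_lt_of_le hcon (le_of_eq (rfl : g.rOut = 1/2))
      linarith
    rw [hy]; simp [h1, h2]
  have hnear1 : y =ᶠ[nhds (1:ℝ)] fun x : ℝ => q1.eval (x:ℂ) := by
    filter_upwards [Metric.ball_mem_nhds (1:ℝ) (by norm_num : (0:ℝ) < 1/4)] with x hx
    have hx' : |x - 1| < 1/4 := by simpa [Real.dist_eq] using hx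
    have h1 : g x = 1 := g.one_of_mem_closedBall (by
      simp only [Metric.mem_closedBall, Real.dist_eq]
      exact le_of_lt hx')
    have h2 : f x = 0 := by
      rw [← Function.notMem_support, f.support_eq]
      simp only [Metric.mem_ball, Real.dist_eq, sub_zero]
      intro hcon
      have : |x| ≥ 3/4 := by
        cases abs_lt.mp hx' with
        | intro hl hr => rw [abs_of_pos (by linarith)]; linarith
      have hc2 : |x| < 1/2 := lt_of_lt_of_le hcon (le_of_eq (rfl : f.rOut = 1/2))
      linarith
    rw [hy]; simp [h1, h2]
  refine ⟨y, hcd, ?_, ?_⟩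
  · intro k
    rw [hnear0.iteratedDeriv_eq (k:ℕ), s12polyeval_iteratedDeriv]
    simpa using s12pjet_deriv m c 0 k
  · intro k
    rw [hnear1.iteratedDeriv_eq (k:ℕ), s12polyeval_iteratedDeriv]
    simpa using s12pjet_deriv m d 1 k

noncomputable section Stmt12Aux

/-- jets of `y` at `0` and `1`. -/
def s12jvec (n : ℕ) (y : ℝ → ℂ) : (Fin (2*n) → ℂ) × (Fin (2*n) → ℂ) :=
  (fun k => iteratedDeriv (k : ℕ) y 0, fun k => iteratedDeriv (k : ℕ) y 1)

def s12u (n : ℕ) (ab : (Fin (2*n) → ℂ) × (Fin (2*n) → ℂ)) :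
    EuclideanSpace ℂ (Fin (2*n)) := WithLp.toLp 2 fun k =>
  if (k : ℕ) < n then
    (-1 : ℂ) ^ (n - 1 - (k : ℕ)) * ab.1 ⟨2*n - 1 - (k : ℕ), by have := k.isLt; omega⟩
  else
    -((-1 : ℂ) ^ (n - 1 - ((k : ℕ) - n)) *
      ab.2 ⟨2*n - 1 - ((k : ℕ) - n), by have := k.isLt; omega⟩)

def s12w (n : ℕ) (ab : (Fin (2*n) → ℂ) × (Fin (2*n) → ℂ)) :
    EuclideanSpace ℂ (Fin (2*n)) := WithLp.toLp 2 fun k =>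
  if (k : ℕ) < n then ab.1 k
  else ab.2 ⟨(k : ℕ) - n, by have := k.isLt; omega⟩

lemma s12_yvee (n : ℕ) (y : ℝ → ℂ) : yvee n y = s12u n (s12jvec n y) := by
  rfl

lemma s12_ywedge (n : ℕ) (y : ℝ → ℂ) : ywedge n y = s12w n (s12jvec n y) := by
  rfl

def s12ulin (n : ℕ) : ((Fin (2*n) → ℂ) × (Fin (2*n) → ℂ)) →ₗ[ℂ]
    EuclideanSpace ℂ (Fin (2*n)) where
  toFun := s12u n
  map_add' := by
    intro x y; ext k
    simp only [s12u, Prod.fst_add, Prod.snd_add, Pi.add_apply, PiLp.add_apply, PiLp.toLp_apply]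
    split_ifs <;> ring
  map_smul' := by
    intro c x; ext k
    simp only [s12u, Prod.smul_fst, Prod.smul_snd, Pi.smul_apply, PiLp.smul_apply, PiLp.toLp_apply,
      smul_eq_mul, RingHom.id_apply]
    split_ifs <;> ring

def s12wlin (n : ℕ) : ((Fin (2*n) → ℂ) × (Fin (2*n) → ℂ)) →ₗ[ℂ]
    EuclideanSpace ℂ (Fin (2*n)) where
  toFun := s12w n
  map_add' := by
    intro x y; ext k
    simp only [s12w, Prod.fst_add, Prod.snd_add, Pi.add_apply, PiLp.add_apply, PiLp.toLp_apply]
    split_ifs <;> ring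
  map_smul' := by
    intro c x; ext k
    simp only [s12w, Prod.smul_fst, Prod.smul_snd, Pi.smul_apply, PiLp.smul_apply, PiLp.toLp_apply,
      smul_eq_mul, RingHom.id_apply]
    split_ifs <;> ring

/-- boundary-condition linear map. -/
def s12bc (n : ℕ) (A B : Matrix (Fin (2*n)) (Fin (2*n)) ℂ) :
    ((Fin (2*n) → ℂ) × (Fin (2*n) → ℂ)) →ₗ[ℂ] (Fin (2*n) → ℂ) :=
  A.mulVecLin.comp (LinearMap.fst ℂ _ _) + B.mulVecLin.comp (LinearMap.snd ℂ _ _)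

lemma s12bc_apply (n : ℕ) (A B : Matrix (Fin (2*n)) (Fin (2*n)) ℂ) (ab) :
    s12bc n A B ab = A.mulVec ab.1 + B.mulVec ab.2 := rfl

lemma s12uw_inj (n : ℕ) (ab : (Fin (2*n) → ℂ) × (Fin (2*n) → ℂ))
    (hu : s12u n ab = 0) (hw : s12w n ab = 0) : ab = 0 := by
  have hu' : ∀ k : Fin (2*n), s12u n ab k = 0 := fun k => by rw [hu]; rfl
  have hw' : ∀ k : Fin (2*n), s12w n ab k = 0 := fun k => by rw [hw]; rfl
  have hpow : ∀ e : ℕ, ((-1 : ℂ)) ^ e ≠ 0 := fun e => pow_ne_zero e (by norm_num)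
  have ha : ab.1 = 0 := by
    funext j
    show ab.1 j = 0
    rcases lt_or_ge (j : ℕ) n with hj | hj
    · have h := hw' j
      simp only [s12w] at h
      rwa [if_pos hj] at h
    · have hjlt := j.isLt
      have h := hu' ⟨2*n - 1 - (j : ℕ), by omega⟩
      simp only [s12u] at h
      rw [if_pos (show 2*n - 1 - (j:ℕ) < n by omega)] at h
      have hidx : (⟨2*n - 1 - (2*n - 1 - (j : ℕ)), by omega⟩ : Fin (2*n)) = j := by
        apply Fin.ext; show 2*n - 1 - (2*n - 1 - (j : ℕ)) = (j:ℕ); omega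
      rw [hidx] at h
      exact (mul_eq_zero.mp h).resolve_left (hpow _)
  have hb : ab.2 = 0 := by
    funext j
    show ab.2 j = 0
    rcases lt_or_ge (j : ℕ) n with hj | hj
    · have hjlt := j.isLt
      have h := hw' ⟨n + (j : ℕ), by omega⟩
      simp only [s12w] at h
      rw [if_neg (show ¬ _ < n by show ¬ n + _ < n; omega)] at h
      have hidx : (⟨n + (j:ℕ) - n, by omega⟩ : Fin (2*n)) = j := by
        apply Fin.ext; show n + (j:ℕ) - n = (j:ℕ); omega
      rwa [hidx] at h
    · have hjlt := j.isLt
      have h := hu' ⟨n + (2*n - 1 - (j : ℕ)), by omega⟩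
      simp only [s12u] at h
      rw [if_neg (show ¬ _ < n by show ¬ n + _ < n; omega)] at h
      have hidx : (⟨2*n - 1 - ((n + (2*n - 1 - (j:ℕ))) - n), by omega⟩ : Fin (2*n)) = j := by
        apply Fin.ext; show 2*n - 1 - ((n + (2*n - 1 - (j:ℕ))) - n) = (j:ℕ); omega
      rw [hidx, neg_eq_zero] at h
      exact (mul_eq_zero.mp h).resolve_left (hpow _)
  exact Prod.ext ha hb

lemma s12finrank_ker (n : ℕ) (A B : Matrix (Fin (2*n)) (Fin (2*n)) ℂ)
    (hrank : (Matrix.fromCols A B).rank = 2 * n) :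
    Module.finrank ℂ (LinearMap.ker (s12bc n A B)) = 2 * n := by
  classical
  set L := (Matrix.fromCols A B).mulVecLin with hL
  set eqv := (LinearEquiv.sumArrowLequivProdArrow (Fin (2*n)) (Fin (2*n)) ℂ ℂ).symm with heqv
  have hcomp : s12bc n A B = L.comp eqv.toLinearMap := by
    apply LinearMap.ext
    intro ab
    have : eqv ab = Sum.elim ab.1 ab.2 := by
      funext s; cases s <;> rfl
    show A.mulVec ab.1 + B.mulVec ab.2 = L (eqv ab)
    rw [this, hL, Matrix.mulVecLin_apply, Matrix.fromCols_mulVec_sumElim]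
  have hrange : Module.finrank ℂ (LinearMap.range (s12bc n A B)) = 2 * n := by
    rw [hcomp, LinearMap.range_comp_of_range_eq_top _ (LinearEquiv.range eqv)]
    exact hrank
  have hrn := LinearMap.finrank_range_add_finrank_ker (s12bc n A B)
  have hdom : Module.finrank ℂ ((Fin (2*n) → ℂ) × (Fin (2*n) → ℂ)) = 2*n + 2*n := by
    rw [Module.finrank_prod]
    simp [Module.finrank_pi]
  rw [hdom, hrange] at hrn
  omega

lemma s12finsum_split (N : ℕ) (f : Fin (2*N) → ℝ) :
    ∑ k, f k = (∑ j : Fin N, f ⟨(j:ℕ), by have := j.isLt; omega⟩)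
      + ∑ j : Fin N, f ⟨N + (j:ℕ), by have := j.isLt; omega⟩ := by
  classical
  set F : ℕ → ℝ := fun i => if h : i < 2*N then f ⟨i, h⟩ else 0 with hF
  have h1 : ∑ k : Fin (2*N), f k = ∑ i ∈ Finset.range (2*N), F i := by
    rw [← Fin.sum_univ_eq_sum_range]
    apply Finset.sum_congr rfl
    intro k _
    rw [hF]
    simp only [Fin.is_lt, dif_pos, Fin.eta]
  have h2 : Finset.range (2*N) = Finset.range (N+N) := by congr 1; omega
  rw [h1, h2, Finset.sum_range_add]
  congr 1
  · rw [← Fin.sum_univ_eq_sum_range]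
    apply Finset.sum_congr rfl
    intro j _
    have hjN := j.isLt
    rw [hF]; simp only []
    rw [dif_pos (by omega : (j:ℕ) < 2*N)]
  · rw [← Fin.sum_univ_eq_sum_range]
    apply Finset.sum_congr rfl
    intro j _
    have hjN := j.isLt
    rw [hF]; simp only []
    rw [dif_pos (by omega : N + (j:ℕ) < 2*N)]

lemma s12hder (y : ℝ → ℂ) (m j : ℕ) (h : ContDiff ℝ (m : ℕ) y) (hj : j < m) (x : ℝ) :
    HasDerivAt (iteratedDeriv j y) (iteratedDeriv (j+1) y x) x := by
  have hd := h.differentiable_iteratedDeriv j (by exact_mod_cast hj)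
  have h2 := (hd x).hasDerivAt
  rw [iteratedDeriv_succ]
  exact h2

lemma s12hder_conj (y : ℝ → ℂ) (m j : ℕ) (h : ContDiff ℝ (m : ℕ) y) (hj : j < m) (x : ℝ) :
    HasDerivAt (fun t => (starRingEnd ℂ) (iteratedDeriv j y t))
      ((starRingEnd ℂ) (iteratedDeriv (j+1) y x)) x := by
  simpa only [starRingEnd_apply] using (s12hder y m j h hj x).star

lemma s12cont (y : ℝ → ℂ) (m j : ℕ) (h : ContDiff ℝ (m : ℕ) y) (hj : j ≤ m) :
    Continuous (iteratedDeriv j y) :=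
  h.continuous_iteratedDeriv j (by exact_mod_cast hj)

lemma s12ibp (y : ℝ → ℂ) (m : ℕ) (h : ContDiff ℝ (m : ℕ) y) (k : ℕ) (hk : 2*k ≤ m) :
    ∫ x in (0:ℝ)..1, iteratedDeriv m y x * (starRingEnd ℂ) (y x)
    = (∑ j ∈ Finset.range k, (-1:ℂ)^j *
        (iteratedDeriv (m-1-j) y 1 * (starRingEnd ℂ) (iteratedDeriv j y 1)
         - iteratedDeriv (m-1-j) y 0 * (starRingEnd ℂ) (iteratedDeriv j y 0)))
      + (-1:ℂ)^k * ∫ x in (0:ℝ)..1,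
          iteratedDeriv (m-k) y x * (starRingEnd ℂ) (iteratedDeriv k y x) := by
  induction k with
  | zero => simp
  | succ k ih =>
      have hk' : 2*k ≤ m := by omega
      rw [ih hk']
      have hmk : m - k = (m - 1 - k) + 1 := by omega
      have hstep : ∫ x in (0:ℝ)..1, iteratedDeriv (m-k) y x
            * (starRingEnd ℂ) (iteratedDeriv k y x)
          = ((starRingEnd ℂ) (iteratedDeriv k y 1) * iteratedDeriv (m-1-k) y 1
              - (starRingEnd ℂ) (iteratedDeriv k y 0) * iteratedDeriv (m-1-k) y 0)
            - ∫ x in (0:ℝ)..1, (starRingEnd ℂ) (iteratedDeriv (k+1) y x)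
                * iteratedDeriv (m-1-k) y x := by
        have hres := intervalIntegral.integral_mul_deriv_eq_deriv_mul
          (u := fun t => (starRingEnd ℂ) (iteratedDeriv k y t))
          (v := iteratedDeriv (m-1-k) y)
          (u' := fun t => (starRingEnd ℂ) (iteratedDeriv (k+1) y t))
          (v' := iteratedDeriv (m-k) y)
          (a := 0) (b := 1)
          (fun x _ => s12hder_conj y m k h (by omega) x)
          (fun x _ => by
            have := s12hder y m (m-1-k) h (by omega) x
            rwa [← hmk] at this)
          (((Complex.continuous_conj.comp (s12cont y m (k+1) h (by omega)))).intervalIntegrable 0 1)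
          ((s12cont y m (m-k) h (by omega)).intervalIntegrable 0 1)
        calc ∫ x in (0:ℝ)..1, iteratedDeriv (m-k) y x * (starRingEnd ℂ) (iteratedDeriv k y x)
            = ∫ x in (0:ℝ)..1, (starRingEnd ℂ) (iteratedDeriv k y x) * iteratedDeriv (m-k) y x := by
              congr 1; funext x; ring
          _ = _ := by rw [hres]
      rw [hstep, Finset.sum_range_succ]
      have hcomm : ∫ x in (0:ℝ)..1, (starRingEnd ℂ) (iteratedDeriv (k+1) y x)
            * iteratedDeriv (m-1-k) y x
          = ∫ x in (0:ℝ)..1, iteratedDeriv (m-(k+1)) y x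
            * (starRingEnd ℂ) (iteratedDeriv (k+1) y x) := by
        have : m - 1 - k = m - (k+1) := by omega
        rw [this]; congr 1; funext x; ring
      rw [hcomm]
      ring

lemma s12identity (n : ℕ) (hn : 1 ≤ n) (y : ℝ → ℂ) (h : ContDiff ℝ ((2*n : ℕ)) y) :
    4 * (∫ x in (0:ℝ)..1,
        (-Complex.I) ^ (2 * n) * iteratedDeriv (2 * n) y x * (starRingEnd ℂ) (y x)).im
      = ‖yvee n y + Complex.I • ywedge n y‖^2
        - ‖yvee n y - Complex.I • ywedge n y‖^2 := by
  have hpow : (-Complex.I) ^ (2 * n) = (-1 : ℂ)^n := by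
    rw [pow_mul]
    congr 1
    simp [pow_two, Complex.I_mul_I]
  have hconst : ∫ x in (0:ℝ)..1,
        (-Complex.I) ^ (2 * n) * iteratedDeriv (2 * n) y x * (starRingEnd ℂ) (y x)
      = (-1:ℂ)^n * ∫ x in (0:ℝ)..1, iteratedDeriv (2 * n) y x * (starRingEnd ℂ) (y x) := by
    rw [← intervalIntegral.integral_const_mul]
    congr 1; funext x; rw [hpow]; ring
  rw [hconst, s12ibp y (2*n) h n (by omega)]
  have h2nn : 2*n - n = n := by omega
  rw [h2nn]
  have hlast : (∫ x in (0:ℝ)..1,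
      iteratedDeriv n y x * (starRingEnd ℂ) (iteratedDeriv n y x)).im = 0 := by
    have : ∀ x : ℝ, iteratedDeriv n y x * (starRingEnd ℂ) (iteratedDeriv n y x)
        = ((Complex.normSq (iteratedDeriv n y x) : ℝ) : ℂ) := fun x => Complex.mul_conj _
    rw [intervalIntegral.integral_congr (g := fun x => ((Complex.normSq (iteratedDeriv n y x) : ℝ) : ℂ)) (fun x _ => this x)]
    rw [intervalIntegral.integral_ofReal]
    exact Complex.ofReal_im _
  -- take imaginary parts
  rw [mul_add, ← mul_assoc, ← pow_add]
  have hnn : (-1:ℂ)^(n+n) = 1 := by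
    rw [← two_mul, pow_mul]; norm_num
  rw [hnn, one_mul, Complex.add_im, hlast, add_zero]
  have hpowR : ∀ j : ℕ, (-1:ℂ)^j = (((-1:ℝ)^j : ℝ) : ℂ) := by
    intro j; push_cast; ring
  rw [hpowR n, Complex.im_ofReal_mul, Complex.im_sum]
  -- rewrite each summand's imaginary part
  have hterm : ∀ j ∈ Finset.range n,
      ((-1:ℂ)^j *
        (iteratedDeriv (2*n-1-j) y 1 * (starRingEnd ℂ) (iteratedDeriv j y 1)
         - iteratedDeriv (2*n-1-j) y 0 * (starRingEnd ℂ) (iteratedDeriv j y 0))).im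
      = (-1:ℝ)^j *
        (iteratedDeriv (2*n-1-j) y 1 * (starRingEnd ℂ) (iteratedDeriv j y 1)
         - iteratedDeriv (2*n-1-j) y 0 * (starRingEnd ℂ) (iteratedDeriv j y 0)).im := by
    intro j _
    rw [hpowR j, Complex.im_ofReal_mul]
  rw [Finset.sum_congr rfl hterm]
  -- right-hand side as a sum
  have hnorm : ∀ v : EuclideanSpace ℂ (Fin (2*n)), ‖v‖^2 = ∑ k, Complex.normSq (v k) := by
    intro v
    rw [EuclideanSpace.norm_eq, Real.sq_sqrt (by positivity)]
    congr 1; funext k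
    rw [← Complex.sq_norm]
  rw [hnorm, hnorm, ← Finset.sum_sub_distrib]
  rw [s12finsum_split n (fun k => Complex.normSq ((yvee n y + Complex.I • ywedge n y) k)
    - Complex.normSq ((yvee n y - Complex.I • ywedge n y) k))]
  rw [← Fin.sum_univ_eq_sum_range, Finset.mul_sum, Finset.mul_sum, ← Finset.sum_add_distrib]
  apply Finset.sum_congr rfl
  intro j _
  have hjn : (j:ℕ) < n := j.isLt
  have hjlt : (j:ℕ) < 2*n := by omega
  have hnjlt : n + (j:ℕ) < 2*n := by omega
  -- evaluate the vectors at the two indices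
  simp only [PiLp.add_apply, PiLp.sub_apply, PiLp.smul_apply, smul_eq_mul]
  have hv1 : yvee n y ⟨(j:ℕ), hjlt⟩ = (-1:ℂ)^(n-1-(j:ℕ)) * iteratedDeriv (2*n-1-(j:ℕ)) y 0 := by
    simp only [yvee]
    rw [if_pos (show ((⟨(j:ℕ), hjlt⟩ : Fin (2*n)):ℕ) < n from hjn)]
  have hw1 : ywedge n y ⟨(j:ℕ), hjlt⟩ = iteratedDeriv (j:ℕ) y 0 := by
    simp only [ywedge]
    rw [if_pos (show ((⟨(j:ℕ), hjlt⟩ : Fin (2*n)):ℕ) < n from hjn)]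
  have hsub : ((⟨n + (j:ℕ), hnjlt⟩ : Fin (2*n)) : ℕ) - n = (j:ℕ) := by
    show n + (j:ℕ) - n = (j:ℕ); omega
  have hv2 : yvee n y ⟨n + (j:ℕ), hnjlt⟩
      = -((-1:ℂ)^(n-1-(j:ℕ)) * iteratedDeriv (2*n-1-(j:ℕ)) y 1) := by
    simp only [yvee]
    rw [if_neg (show ¬ ((⟨n + (j:ℕ), hnjlt⟩ : Fin (2*n)):ℕ) < n by show ¬ n + _ < n; omega), hsub]
  have hw2 : ywedge n y ⟨n + (j:ℕ), hnjlt⟩ = iteratedDeriv (j:ℕ) y 1 := by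
    simp only [ywedge]
    rw [if_neg (show ¬ ((⟨n + (j:ℕ), hnjlt⟩ : Fin (2*n)):ℕ) < n by show ¬ n + _ < n; omega), hsub]
  rw [hv1, hw1, hv2, hw2]
  have hcast : (-1:ℂ)^(n-1-(j:ℕ)) = (((-1:ℝ)^(n-1-(j:ℕ)) : ℝ) : ℂ) := by push_cast; ring
  rw [hcast]
  have hrel : (-1:ℝ)^n * (-1:ℝ)^(j:ℕ) = -(-1:ℝ)^(n-1-(j:ℕ)) := by
    have hnj : n + (j:ℕ) = (n-1-(j:ℕ)) + (2*(j:ℕ)+1) := by omega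
    rw [← pow_add, hnj, pow_add]
    have : (-1:ℝ)^(2*(j:ℕ)+1) = -1 := by
      rw [pow_succ, pow_mul]; norm_num
    rw [this]; ring
  set e := (-1:ℝ)^(n-1-(j:ℕ)) with he
  set p := iteratedDeriv (2*n-1-(j:ℕ)) y 0 with hp
  set q := iteratedDeriv (j:ℕ) y 0 with hq
  set r := iteratedDeriv (2*n-1-(j:ℕ)) y 1 with hr
  set s := iteratedDeriv (j:ℕ) y 1 with hs
  have hmain : (4:ℝ) * ((-e) *
        (r * (starRingEnd ℂ) s - p * (starRingEnd ℂ) q).im)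
      = (Complex.normSq ((e : ℂ) * p + Complex.I * q)
          - Complex.normSq ((e : ℂ) * p - Complex.I * q))
        + (Complex.normSq (-((e:ℂ) * r) + Complex.I * s)
          - Complex.normSq (-((e:ℂ) * r) - Complex.I * s)) := by
    simp only [Complex.normSq_apply, Complex.add_re, Complex.add_im, Complex.sub_re,
      Complex.sub_im, Complex.mul_re, Complex.mul_im, Complex.neg_re, Complex.neg_im,
      Complex.I_re, Complex.I_im, Complex.conj_re, Complex.conj_im, Complex.ofReal_re,
      Complex.ofReal_im]
    ring
  calc 4 * ((-1:ℝ)^n * ((-1:ℝ)^(j:ℕ) *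
        (r * (starRingEnd ℂ) s - p * (starRingEnd ℂ) q).im))
      = 4 * ((-e) * (r * (starRingEnd ℂ) s - p * (starRingEnd ℂ) q).im) := by
        linear_combination (4 * (r * (starRingEnd ℂ) s - p * (starRingEnd ℂ) q).im) * hrel
    _ = _ := hmain

end Stmt12Aux

/-- for `rank (A | B) = 2n`, the boundary conditions `A ŷ₀ + B ŷ₁ = 0`
are dissipative for `l₀(y) = (−i)^{2n} y^{(2n)}` iff they can be rewritten as
`(V − I)y^∨ + i(V + I)y^∧ = 0` with a linear contraction `V` of `ℂ^{2n}`. -/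
theorem stmt12 (n : ℕ) (hn : 1 ≤ n) (A B : Matrix (Fin (2 * n)) (Fin (2 * n)) ℂ)
    (hrank : (Matrix.fromCols A B).rank = 2 * n) :
    (∀ y : ℝ → ℂ, ContDiff ℝ (2 * n) y →
      A.mulVec (fun k : Fin (2 * n) => iteratedDeriv (k : ℕ) y 0)
        + B.mulVec (fun k : Fin (2 * n) => iteratedDeriv (k : ℕ) y 1) = 0 →
      0 ≤ (∫ x in (0:ℝ)..1,
        (-Complex.I) ^ (2 * n) * iteratedDeriv (2 * n) y x * (starRingEnd ℂ) (y x)).im)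
    ↔
    (∃ V : EuclideanSpace ℂ (Fin (2 * n)) →ₗ[ℂ] EuclideanSpace ℂ (Fin (2 * n)),
      (∀ x, ‖V x‖ ≤ ‖x‖) ∧
      ∀ y : ℝ → ℂ, ContDiff ℝ (2 * n) y →
        (A.mulVec (fun k : Fin (2 * n) => iteratedDeriv (k : ℕ) y 0)
          + B.mulVec (fun k : Fin (2 * n) => iteratedDeriv (k : ℕ) y 1) = 0
        ↔ (V (yvee n y) - yvee n y) + Complex.I • (V (ywedge n y) + ywedge n y) = 0)) := by
  classical
  set S : Submodule ℂ ((Fin (2*n) → ℂ) × (Fin (2*n) → ℂ)) :=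
    LinearMap.ker (s12bc n A B) with hS
  set plin := s12ulin n + Complex.I • s12wlin n with hplin
  set mlin := s12ulin n - Complex.I • s12wlin n with hmlin
  have hp_apply : ∀ ξ, plin ξ = s12u n ξ + Complex.I • s12w n ξ := fun ξ => rfl
  have hm_apply : ∀ ξ, mlin ξ = s12u n ξ - Complex.I • s12w n ξ := fun ξ => rfl
  have h2I : (2 : ℂ) * Complex.I ≠ 0 := by
    simp [Complex.I_ne_zero]
  have hrecover : ∀ ξ ζ, plin ξ = plin ζ → mlin ξ = mlin ζ → ξ = ζ := by
    intro ξ ζ hp hm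
    have e1 : ∀ ab, (2:ℂ) • s12u n ab = plin ab + mlin ab := by
      intro ab; rw [hp_apply, hm_apply]; module
    have e2 : ∀ ab, ((2:ℂ) * Complex.I) • s12w n ab = plin ab - mlin ab := by
      intro ab; rw [hp_apply, hm_apply]; module
    have hu2 : (2:ℂ) • s12u n ξ = (2:ℂ) • s12u n ζ := by rw [e1, e1, hp, hm]
    have hu : s12u n ξ = s12u n ζ := smul_right_injective _ (two_ne_zero) hu2
    have hw2 : ((2:ℂ) * Complex.I) • s12w n ξ = ((2:ℂ) * Complex.I) • s12w n ζ := by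
      rw [e2, e2, hp, hm]
    have hw : s12w n ξ = s12w n ζ := smul_right_injective _ h2I hw2
    have hu' : s12u n (ξ - ζ) = 0 := by
      have := (s12ulin n).map_sub ξ ζ
      change s12u n (ξ - ζ) = s12u n ξ - s12u n ζ at this
      rw [this, hu, sub_self]
    have hw' : s12w n (ξ - ζ) = 0 := by
      have := (s12wlin n).map_sub ξ ζ
      change s12w n (ξ - ζ) = s12w n ξ - s12w n ζ at this
      rw [this, hw, sub_self]
    have := s12uw_inj n (ξ - ζ) hu' hw'
    rwa [sub_eq_zero] at this
  have hbc_jets : ∀ y : ℝ → ℂ,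
      (A.mulVec (fun k : Fin (2 * n) => iteratedDeriv (k : ℕ) y 0)
        + B.mulVec (fun k : Fin (2 * n) => iteratedDeriv (k : ℕ) y 1) = 0)
      ↔ s12jvec n y ∈ S := by
    intro y
    rw [hS, LinearMap.mem_ker, s12bc_apply]
    rfl
  have hPM : ∀ (V : EuclideanSpace ℂ (Fin (2 * n)) →ₗ[ℂ] EuclideanSpace ℂ (Fin (2 * n)))
      (y : ℝ → ℂ),
      ((V (yvee n y) - yvee n y) + Complex.I • (V (ywedge n y) + ywedge n y) = 0
        ↔ V (plin (s12jvec n y)) = mlin (s12jvec n y)) := by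
    intro V y
    rw [s12_yvee, s12_ywedge]
    have hexpr : (V (s12u n (s12jvec n y)) - s12u n (s12jvec n y))
        + Complex.I • (V (s12w n (s12jvec n y)) + s12w n (s12jvec n y))
        = V (plin (s12jvec n y)) - mlin (s12jvec n y) := by
      rw [hp_apply, hm_apply, map_add, map_smul]
      module
    rw [hexpr, sub_eq_zero]
  have hidentity : ∀ y : ℝ → ℂ, ContDiff ℝ (2 * n) y →
      4 * (∫ x in (0:ℝ)..1,
        (-Complex.I) ^ (2 * n) * iteratedDeriv (2 * n) y x * (starRingEnd ℂ) (y x)).im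
      = ‖plin (s12jvec n y)‖^2 - ‖mlin (s12jvec n y)‖^2 := by
    intro y hy
    have := s12identity n hn y (by exact_mod_cast hy)
    rw [s12_yvee, s12_ywedge] at this
    rw [this, hp_apply, hm_apply]
  constructor
  · -- (i) → (ii)
    intro hdiss
    have key : ∀ ξ, ξ ∈ S → ‖mlin ξ‖ ≤ ‖plin ξ‖ := by
      intro ξ hξ
      obtain ⟨y, hy, h0, h1⟩ := s12jets_exist (2*n) ξ.1 ξ.2
      have hjets : s12jvec n y = ξ := by
        apply Prod.ext
        · funext k; exact h0 k
        · funext k; exact h1 k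
      have hy' : ContDiff ℝ (2 * n : WithTop ℕ∞) y := by exact_mod_cast hy
      have hbc : A.mulVec (fun k : Fin (2 * n) => iteratedDeriv (k : ℕ) y 0)
          + B.mulVec (fun k : Fin (2 * n) => iteratedDeriv (k : ℕ) y 1) = 0 :=
        (hbc_jets y).2 (by rw [hjets]; exact hξ)
      have him := hdiss y hy' hbc
      have hid := hidentity y hy'
      rw [hjets] at hid
      nlinarith [norm_nonneg (mlin ξ), norm_nonneg (plin ξ)]
    set Pr := plin.domRestrict S with hPr
    have hPr_apply : ∀ ξ : S, Pr ξ = plin ξ.val := fun ξ => rfl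
    have hinj : Function.Injective Pr := by
      intro ξ ζ hpq
      have h1 : plin ξ.val = plin ζ.val := hpq
      have h2 : mlin ξ.val = mlin ζ.val := by
        have d1 : plin (ξ.val - ζ.val) = 0 := by
          rw [map_sub, h1, sub_self]
        have hd : (ξ.val - ζ.val) ∈ S := sub_mem ξ.2 ζ.2
        have := key _ hd
        rw [d1, norm_zero] at this
        have : mlin (ξ.val - ζ.val) = 0 := by
          have h0 := norm_le_zero_iff.mp this
          exact h0
        rw [map_sub, sub_eq_zero] at this
        exact this
      exact Subtype.ext (hrecover _ _ h1 h2)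
    have hfr : Module.finrank ℂ S = Module.finrank ℂ (EuclideanSpace ℂ (Fin (2*n))) := by
      rw [s12finrank_ker n A B hrank, finrank_euclideanSpace_fin]
    have hsurj : Function.Surjective Pr :=
      (LinearMap.injective_iff_surjective_of_finrank_eq_finrank hfr).1 hinj
    set e := LinearEquiv.ofBijective Pr ⟨hinj, hsurj⟩ with he
    have he_apply : ∀ ξ : S, e ξ = plin ξ.val := fun ξ => rfl
    refine ⟨(mlin.domRestrict S).comp (e.symm.toLinearMap), ?_, ?_⟩
    · intro x
      have h1 : ((mlin.domRestrict S).comp (e.symm.toLinearMap)) x = mlin (e.symm x).val := rfl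
      have h2 : plin ((e.symm x) : _).val = x := by
        have := e.apply_symm_apply x
        rwa [he_apply] at this
      rw [h1]
      conv_rhs => rw [← h2]
      exact key _ (e.symm x).2
    · intro y hy
      rw [hbc_jets, hPM]
      set ξ := s12jvec n y
      constructor
      · intro hmem
        have h1 : e ⟨ξ, hmem⟩ = plin ξ := rfl
        have h2 : e.symm (plin ξ) = ⟨ξ, hmem⟩ := by
          rw [← h1, e.symm_apply_apply]
        show mlin (e.symm (plin ξ)).val = mlin ξ
        rw [h2]
      · intro hVeq
        have h1 : plin ((e.symm (plin ξ)) : _).val = plin ξ := by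
          have := e.apply_symm_apply (plin ξ)
          rwa [he_apply] at this
        have h2 : mlin ((e.symm (plin ξ)) : _).val = mlin ξ := hVeq
        have := hrecover _ _ h1 h2
        rw [← this]
        exact (e.symm (plin ξ)).2
  · -- (ii) → (i)
    rintro ⟨V, hV, hViff⟩ y hy hbc
    have hVeq := (hPM V y).1 ((hViff y hy).1 hbc)
    have hle : ‖mlin (s12jvec n y)‖ ≤ ‖plin (s12jvec n y)‖ := by
      rw [← hVeq]; exact hV _
    have hid := hidentity y hy
    nlinarith [norm_nonneg (mlin (s12jvec n y)), norm_nonneg (plin (s12jvec n y))]
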